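/- Let p be a prime, α > 1, b > 0, and define u : ℚ_p → ℝ by u(x) = b·((1 − p⁻¹)/(1 − p^{−α})·Ω(|x|_p) + |x|_p^{α−1}·(1 − Ω(|x|_p))). Then for every integer i ≥ 0 the u-weighted volume of the ball of radius p^i satisfies ∫_{ℚ_p} u(y)·Ω(|y|_p p^{−i}) dμ(y) = b·(1 − p⁻¹)·p^{α(i+1)}/(p^{α} − 1). -/

import Mathlib

open MeasureTheory ENNReal

/-- `Ω(r) = 1` for `r ≤ 1` and `Ω(r) = 0` for `r > 1`. -/
noncomputable def Omega (r : ℝ) : ℝ := if r ≤ 1 then 1 else 0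

private lemma padic_ball_measure (p : ℕ) [Fact p.Prime]
    [MeasurableSpace ℚ_[p]] [BorelSpace ℚ_[p]]
    (μ : Measure ℚ_[p]) [μ.IsAddHaarMeasure]
    (hμ : μ (Metric.closedBall 0 1) = 1) :
    ∀ n : ℕ, μ (Metric.closedBall (0:ℚ_[p]) ((p:ℝ)^n)) = ((p^n : ℕ) : ℝ≥0∞) := by
  have hp : (1:ℝ) < p := by exact_mod_cast (Fact.out : p.Prime).one_lt
  have hp0 : (0:ℝ) < p := lt_trans one_pos hp
  intro n
  induction n with
  | zero => simpa using hμ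
  | succ n ih =>
    set c : ℕ → ℚ_[p] := fun j => (j : ℚ_[p]) * (p : ℚ_[p]) ^ (-(n+1 : ℤ)) with hc
    set T : ℕ → Set ℚ_[p] := fun j => (fun y => -(c j) + y) ⁻¹' Metric.closedBall 0 ((p:ℝ)^n)
      with hT
    have hTmem : ∀ j y, y ∈ T j ↔ ‖y - c j‖ ≤ (p:ℝ)^n := by
      intro j y
      simp [hT, Metric.mem_closedBall, dist_eq_norm, neg_add_eq_sub]
    have hnormc : ∀ j k : ℕ, j < p → k < p → j ≠ k → ‖c j - c k‖ = (p:ℝ)^(n+1) := by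
      intro j k hj hk hjk
      have hd : ¬ ((p:ℤ) ∣ ((j:ℤ) - (k:ℤ) : ℤ)) := by
        intro h
        have hne : ((j:ℤ) - (k:ℤ) : ℤ) ≠ 0 := sub_ne_zero.mpr (by exact_mod_cast hjk)
        have h2 := Int.le_of_dvd (abs_pos.mpr hne) ((dvd_abs _ _).mpr h)
        have h1 : |(j:ℤ) - (k:ℤ)| < p := abs_sub_lt_iff.mpr ⟨by omega, by omega⟩
        linarith
      have h1 : ‖((((j:ℤ) - (k:ℤ) : ℤ)) : ℚ_[p])‖ = 1 := by
        have hle := Padic.norm_int_le_one (p := p) ((j:ℤ) - (k:ℤ) : ℤ)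
        have hlt := (Padic.norm_intCast_lt_one_iff (p := p) (k := ((j:ℤ) - (k:ℤ) : ℤ))).not.mpr
          (by exact_mod_cast hd)
        exact le_antisymm hle (not_lt.mp hlt)
      have heq : c j - c k = ((((j:ℤ) - (k:ℤ) : ℤ)) : ℚ_[p]) * (p : ℚ_[p]) ^ (-(n+1 : ℤ)) := by
        simp [hc]; ring
      rw [heq, norm_mul, h1, one_mul, Padic.norm_p_zpow, neg_neg,
        show ((n:ℤ)+1) = ((n+1 : ℕ) : ℤ) by push_cast; ring, zpow_natCast]
    have hcover : Metric.closedBall (0:ℚ_[p]) ((p:ℝ)^(n+1)) = ⋃ j ∈ Finset.range p, T j := by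
      ext x
      simp only [Metric.mem_closedBall, dist_zero_right, Set.mem_iUnion, Finset.mem_range]
      constructor
      · intro hx
        have hz1 : ‖x * (p : ℚ_[p]) ^ ((n+1 : ℕ))‖ ≤ 1 := by
          rw [norm_mul, Padic.norm_p_pow]
          have : (p:ℝ) ^ (-(n+1:ℕ) : ℤ) = ((p:ℝ)^(n+1))⁻¹ := by
            rw [zpow_neg, zpow_natCast]
          rw [this]
          rw [← div_eq_mul_inv, div_le_one (by positivity)]
          exact hx
        set z : ℤ_[p] := ⟨x * (p : ℚ_[p]) ^ ((n+1 : ℕ)), hz1⟩ with hzdef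
        refine ⟨z.appr 1, by simpa using z.appr_lt 1, ?_⟩
        rw [hTmem]
        have hspec := z.appr_spec 1
        have hznorm : ‖z - (z.appr 1 : ℤ_[p])‖ ≤ (p:ℝ)^(-(1:ℕ) : ℤ) := by
          rw [PadicInt.norm_le_pow_iff_mem_span_pow]
          simpa using hspec
        have hpne : (p : ℚ_[p]) ≠ 0 := by
          exact_mod_cast (Nat.cast_ne_zero.mpr (Fact.out : p.Prime).ne_zero)
        have hzq : (z : ℚ_[p]) = x * (p : ℚ_[p]) ^ ((n+1 : ℕ)) := rfl
        have hcancel : (p:ℚ_[p])^((n+1:ℕ)) * (p:ℚ_[p])^(-(n+1:ℤ)) = 1 := by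
          rw [← zpow_natCast (p:ℚ_[p]) (n+1), ← zpow_add₀ hpne,
            show (((n+1:ℕ):ℤ) + (-(n+1:ℤ))) = 0 by push_cast; ring, zpow_zero]
        have hxc : x - c (z.appr 1) = ((z - (z.appr 1 : ℤ_[p]) : ℤ_[p]) : ℚ_[p]) *
            (p : ℚ_[p]) ^ (-(n+1 : ℤ)) := by
          have hsub : ((z - (z.appr 1 : ℤ_[p]) : ℤ_[p]) : ℚ_[p]) =
              x * (p : ℚ_[p]) ^ ((n+1 : ℕ)) - ((z.appr 1 : ℕ) : ℚ_[p]) := by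
            push_cast [hzq]
            ring
          rw [hsub, sub_mul, mul_assoc, hcancel, mul_one, hc]
        rw [hxc, norm_mul, Padic.norm_p_zpow, neg_neg]
        calc ‖((z - (z.appr 1 : ℤ_[p]) : ℤ_[p]) : ℚ_[p])‖ * (p:ℝ)^((n+1:ℤ))
            ≤ (p:ℝ)^(-(1:ℕ):ℤ) * (p:ℝ)^((n+1:ℤ)) := by
              apply mul_le_mul_of_nonneg_right _ (by positivity)
              rw [PadicInt.norm_def] at hznorm
              exact hznorm
          _ = (p:ℝ)^n := by
              rw [← zpow_add₀ (ne_of_gt hp0)]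
              norm_num [zpow_natCast]
      · rintro ⟨j, hj, hy⟩
        rw [hTmem] at hy
        have hcj : ‖c j‖ ≤ (p:ℝ)^(n+1) := by
          rw [hc]
          simp only [norm_mul, Padic.norm_p_zpow, neg_neg]
          calc ‖(j : ℚ_[p])‖ * (p:ℝ)^((n+1:ℤ)) ≤ 1 * (p:ℝ)^((n+1:ℤ)) := by
                apply mul_le_mul_of_nonneg_right _ (by positivity)
                exact_mod_cast Padic.norm_int_le_one (p := p) j
            _ = (p:ℝ)^(n+1) := by
                rw [one_mul, show ((n:ℤ)+1) = ((n+1:ℕ):ℤ) by push_cast; ring, zpow_natCast]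
        calc ‖x‖ = ‖(x - c j) + c j‖ := by ring_nf
          _ ≤ max ‖x - c j‖ ‖c j‖ := Padic.nonarchimedean _ _
          _ ≤ (p:ℝ)^(n+1) := max_le (le_trans hy (by
              apply pow_le_pow_right₀ (le_of_lt hp); omega)) hcj
    have hdisj : (↑(Finset.range p) : Set ℕ).PairwiseDisjoint T := by
      intro j hj k hk hjk
      simp only [Finset.coe_range, Set.mem_Iio] at hj hk
      simp only [Function.onFun]
      rw [Set.disjoint_left]
      intro y hyj hyk
      rw [hTmem] at hyj hyk
      have : ‖c j - c k‖ ≤ (p:ℝ)^n := by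
        have : c j - c k = (y - c k) - (y - c j) := by ring
        rw [this]
        calc ‖(y - c k) - (y - c j)‖ = ‖(y - c k) + (-(y - c j))‖ := by rw [sub_eq_add_neg]
          _ ≤ max ‖y - c k‖ ‖-(y - c j)‖ := Padic.nonarchimedean _ _
          _ = max ‖y - c k‖ ‖y - c j‖ := by rw [norm_neg]
          _ ≤ (p:ℝ)^n := max_le hyk hyj
      rw [hnormc j k hj hk hjk] at this
      have : (p:ℝ)^n < (p:ℝ)^(n+1) := pow_lt_pow_right₀ hp (by omega)
      linarith
    have hTmeas : ∀ j, MeasurableSet (T j) := fun j =>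
      (measurable_const_add _) measurableSet_closedBall
    rw [hcover, measure_biUnion_finset hdisj (fun j _ => hTmeas j)]
    have hTμ : ∀ j, μ (T j) = ((p^n : ℕ) : ℝ≥0∞) := by
      intro j
      rw [hT]
      rw [measure_preimage_add]
      exact ih
    rw [Finset.sum_congr rfl (fun j _ => hTμ j)]
    simp [Finset.sum_const, pow_succ]
    ring

/-- for the power-law potential `u`, the `u`-weighted volume of the ball of
radius `p^i` equals `b(1-p⁻¹)p^{α(i+1)}/(p^α - 1)` for every integer `i ≥ 0`. -/
theorem padic_powerlaw_ball_volumes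
    (p : ℕ) [Fact p.Prime]
    [MeasurableSpace ℚ_[p]] [BorelSpace ℚ_[p]]
    (μ : Measure ℚ_[p]) [μ.IsAddHaarMeasure]
    (hμ : μ (Metric.closedBall 0 1) = 1)
    (α b : ℝ) (hα : 1 < α) (hb : 0 < b)
    (u : ℚ_[p] → ℝ)
    (hu : ∀ x : ℚ_[p], u x =
      b * ((1 - (p : ℝ)⁻¹) / (1 - (p : ℝ) ^ (-α)) * Omega ‖x‖ +
        ‖x‖ ^ (α - 1) * (1 - Omega ‖x‖))) :
    ∀ i : ℤ, 0 ≤ i →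
      Integrable (fun y : ℚ_[p] => u y * Omega (‖y‖ * (p : ℝ) ^ (-i))) μ ∧
      ∫ y : ℚ_[p], u y * Omega (‖y‖ * (p : ℝ) ^ (-i)) ∂μ =
        b * (1 - (p : ℝ)⁻¹) * (p : ℝ) ^ (α * ((i : ℝ) + 1)) / ((p : ℝ) ^ α - 1) := by
  have hprime : p.Prime := Fact.out
  have hp : (1:ℝ) < p := by exact_mod_cast hprime.one_lt
  have hp0 : (0:ℝ) < p := lt_trans one_pos hp
  have hB := padic_ball_measure p μ hμ
  set B : ℕ → Set ℚ_[p] := fun n => Metric.closedBall (0:ℚ_[p]) ((p:ℝ)^n) with hBdef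
  have hBmeas : ∀ n, MeasurableSet (B n) := fun n => measurableSet_closedBall
  have hBfin : ∀ n, μ (B n) ≠ ⊤ := fun n => by rw [hB n]; exact ENNReal.natCast_ne_top _
  have hΩ1 : ∀ r : ℝ, r ≤ 1 → Omega r = 1 := fun r h => if_pos h
  have hΩ0 : ∀ r : ℝ, ¬ r ≤ 1 → Omega r = 0 := fun r h => if_neg h
  have hexp : ∀ (n : ℕ) (y : ℚ_[p]), (‖y‖ * (p:ℝ)^(-(n:ℤ)) ≤ 1 ↔ ‖y‖ ≤ (p:ℝ)^n) := by
    intro n y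
    rw [zpow_neg, zpow_natCast, ← div_eq_mul_inv, div_le_one (by positivity)]
  have hqα : (1:ℝ) < (p:ℝ)^α :=
    (Real.one_lt_rpow_iff_of_pos hp0).mpr (Or.inl ⟨hp, by linarith⟩)
  have hqαne : (p:ℝ)^α - 1 ≠ 0 := ne_of_gt (by linarith)
  have hneg : (p:ℝ)^(-α) = ((p:ℝ)^α)⁻¹ := Real.rpow_neg (le_of_lt hp0) α
  set c0 : ℝ := (1 - (p:ℝ)⁻¹) / (1 - (p:ℝ)^(-α)) with hc0
  have hc0v : c0 = (1 - (p:ℝ)⁻¹) * (p:ℝ)^α / ((p:ℝ)^α - 1) := by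
    rw [hc0, hneg]
    have h1 : (p:ℝ)^α ≠ 0 := by positivity
    field_simp
  have hshell : ∀ (n:ℕ) (y : ℚ_[p]), ‖y‖ ≤ (p:ℝ)^(n+1) → ¬ ‖y‖ ≤ (p:ℝ)^n →
      ‖y‖ = (p:ℝ)^(n+1) := by
    intro n y h1 h2
    have hy0 : y ≠ 0 := by
      intro h
      exact h2 (by rw [h, norm_zero]; positivity)
    rw [Padic.norm_eq_zpow_neg_valuation hy0] at h1 h2 ⊢
    rw [← zpow_natCast (p:ℝ) (n+1)] at h1 ⊢
    rw [← zpow_natCast (p:ℝ) n] at h2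
    have hlt : ((n:ℤ)) < -y.valuation := by
      by_contra hcon
      exact h2 ((zpow_le_zpow_iff_right₀ hp).mpr (not_lt.mp hcon))
    have hle : -y.valuation ≤ ((n+1:ℕ):ℤ) := (zpow_le_zpow_iff_right₀ hp).mp h1
    congr 1
    push_cast at hlt hle ⊢
    omega
  set g : ℕ → ℚ_[p] → ℝ := fun n y => u y * Omega (‖y‖ * (p:ℝ)^(-(n:ℤ))) with hg
  have h0 : g 0 = Set.indicator (B 0) (fun _ => b * c0) := by
    funext y
    have e0 : ‖y‖ * (p:ℝ)^(-((0:ℕ):ℤ)) = ‖y‖ := by norm_num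
    have eB : y ∈ B 0 ↔ ‖y‖ ≤ 1 := by
      simp [hBdef, Metric.mem_closedBall, dist_zero_right]
    by_cases h : ‖y‖ ≤ 1
    · rw [hg]
      simp only
      rw [e0, hΩ1 _ h, mul_one, hu y, hΩ1 _ h,
        Set.indicator_of_mem (eB.mpr h)]
      ring
    · rw [hg]
      simp only
      rw [e0, hΩ0 _ h, mul_zero, Set.indicator_of_notMem (fun hm => h (eB.mp hm))]
  have hstep : ∀ n : ℕ, g (n+1) = g n + Set.indicator (B (n+1) \ B n)
      (fun _ => b * (p:ℝ)^(((n:ℝ)+1)*(α-1))) := by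
    intro n
    funext y
    have hmem : ∀ m : ℕ, y ∈ B m ↔ ‖y‖ ≤ (p:ℝ)^m := by
      intro m; simp [hBdef, Metric.mem_closedBall, dist_zero_right]
    rw [hg]
    simp only [Pi.add_apply]
    by_cases h1 : ‖y‖ ≤ (p:ℝ)^n
    · have h2 : ‖y‖ ≤ (p:ℝ)^(n+1) :=
        le_trans h1 (pow_le_pow_right₀ (le_of_lt hp) (by omega))
      rw [hΩ1 _ ((hexp (n+1) y).mpr h2), hΩ1 _ ((hexp n y).mpr h1),
        Set.indicator_of_notMem (fun hm => hm.2 ((hmem n).mpr h1))]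
      ring
    · by_cases h2 : ‖y‖ ≤ (p:ℝ)^(n+1)
      · have hval : ‖y‖ = (p:ℝ)^(n+1) := hshell n y h2 h1
        have hΩy : Omega ‖y‖ = 0 := by
          apply hΩ0
          rw [hval]
          exact not_le.mpr (one_lt_pow₀ hp (by omega))
        rw [hΩ1 _ ((hexp (n+1) y).mpr h2), hΩ0 _ (fun hc => h1 ((hexp n y).mp hc)),
          Set.indicator_of_mem ((Set.mem_diff y).mpr
            ⟨(hmem (n+1)).mpr h2, fun hm => h1 ((hmem n).mp hm)⟩),
          hu y, hΩy]
        have hny : ‖y‖ ^ (α - 1) = (p:ℝ)^(((n:ℝ)+1)*(α-1)) := by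
          rw [hval, ← Real.rpow_natCast (p:ℝ) (n+1), ← Real.rpow_mul (le_of_lt hp0)]
          push_cast
          ring_nf
        rw [hny]
        ring
      · rw [hΩ0 _ (fun hc => h2 ((hexp (n+1) y).mp hc)),
          hΩ0 _ (fun hc => h1 ((hexp n y).mp hc)),
          Set.indicator_of_notMem (fun hm => h2 ((hmem (n+1)).mp hm.1))]
        ring
  have hBtoReal : ∀ n : ℕ, (μ (B n)).toReal = (p:ℝ)^n := by
    intro n
    rw [hB n, ENNReal.toReal_natCast]
    push_cast
    rfl
  have key : ∀ n : ℕ, Integrable (g n) μ ∧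
      ∫ y, g n y ∂μ = b * (1 - (p:ℝ)⁻¹) * (p:ℝ)^(α*((n:ℝ)+1)) / ((p:ℝ)^α - 1) := by
    intro n
    induction n with
    | zero =>
      have hint : Integrable (g 0) μ := by
        rw [h0]
        exact (integrable_indicator_iff (hBmeas 0)).mpr
          ((integrableOn_const_iff).mpr (Or.inr (lt_of_le_of_ne le_top (hBfin 0))))
      refine ⟨hint, ?_⟩
      have : ∫ y, g 0 y ∂μ = (μ (B 0)).toReal • (b * c0) := by
        rw [h0]
        exact integral_indicator_const _ (hBmeas 0)
      rw [this, hBtoReal 0]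
      simp only [pow_zero, one_smul, Nat.cast_zero]
      rw [hc0v]
      rw [show α * ((0:ℝ) + 1) = α by ring]
      ring
    | succ n ih =>
      have hdmeas : MeasurableSet (B (n+1) \ B n) := (hBmeas (n+1)).diff (hBmeas n)
      have hdfin : μ (B (n+1) \ B n) < ⊤ :=
        lt_of_le_of_lt (measure_mono Set.diff_subset)
          (lt_of_le_of_ne le_top (hBfin (n+1)))
      have hindint : Integrable (Set.indicator (B (n+1) \ B n)
          (fun _ => b * (p:ℝ)^(((n:ℝ)+1)*(α-1)))) μ :=
        (integrable_indicator_iff hdmeas).mpr ((integrableOn_const_iff).mpr (Or.inr hdfin))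
      have hint : Integrable (g (n+1)) μ := by
        rw [hstep n]
        exact ih.1.add hindint
      refine ⟨hint, ?_⟩
      have hsub : B n ⊆ B (n+1) :=
        Metric.closedBall_subset_closedBall (pow_le_pow_right₀ (le_of_lt hp) (by omega))
      have hμd : (μ (B (n+1) \ B n)).toReal = (p:ℝ)^(n+1) - (p:ℝ)^n := by
        rw [measure_diff hsub (hBmeas n).nullMeasurableSet (hBfin n),
          ENNReal.toReal_sub_of_le (measure_mono hsub) (hBfin (n+1)),
          hBtoReal (n+1), hBtoReal n]
      have hi2 : ∫ y, g (n+1) y ∂μ = (∫ y, g n y ∂μ) +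
          ((μ (B (n+1) \ B n)).toReal • (b * (p:ℝ)^(((n:ℝ)+1)*(α-1)))) := by
        rw [hstep n]
        simp only [Pi.add_apply]
        rw [integral_add ih.1 hindint, integral_indicator_const _ hdmeas]
        rfl
      rw [hi2, ih.2, hμd]
      -- arithmetic
      have e1 : (p:ℝ)^(n+1) - (p:ℝ)^n = (p:ℝ)^(((n:ℝ)+1)) * (1 - (p:ℝ)⁻¹) := by
        rw [← Real.rpow_natCast (p:ℝ) (n+1)]
        push_cast
        rw [mul_sub, mul_one]
        congr 1
        rw [show (n:ℝ) + 1 = (n:ℝ) + 1 from rfl]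
        rw [← Real.rpow_natCast (p:ℝ) n, ← Real.rpow_neg_one (p:ℝ),
          ← Real.rpow_add hp0]
        norm_num
      have e2 : (p:ℝ)^(((n:ℝ)+1)*(α-1)) * (p:ℝ)^(((n:ℝ)+1)) = (p:ℝ)^(α*((n:ℝ)+1)) := by
        rw [← Real.rpow_add hp0]
        congr 1
        ring
      have e3 : (p:ℝ)^(α*((n:ℝ)+1+1)) = (p:ℝ)^(α*((n:ℝ)+1)) * (p:ℝ)^α := by
        rw [← Real.rpow_add hp0]
        congr 1
        ring
      rw [smul_eq_mul,
        show ((((n+1):ℕ)):ℝ) = (n:ℝ)+1 by push_cast; ring, e3, e1]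
      rw [← e2]
      field_simp
      ring
    -- end induction
  intro i hi
  obtain ⟨n, rfl⟩ : ∃ n : ℕ, i = (n:ℤ) := ⟨i.toNat, (Int.toNat_of_nonneg hi).symm⟩
  have hk := key n
  constructor
  · exact hk.1
  · rw [hk.2]
    norm_num
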